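/- For any finite-dimensional vector space U, vectors v₁,v₂,v₃ in U, forms λ₁,λ₂,λ₃ in U*, and permutation σ in S₃, the linear form on L(U^{⊗3}) given by composing ι*(v₁⊗λ₁) ⊗ ι*(v₂⊗λ₂) ⊗ ι*(v₃⊗λ₃) with left multiplication by t_σ equals ι*(v₁⊗λ_{σ⁻¹(1)}) ⊗ ι*(v₂⊗λ_{σ⁻¹(2)}) ⊗ ι*(v₃⊗λ_{σ⁻¹(3)}). -/

import Mathlib

open TensorProduct

/-- For vectors `v₁,v₂,v₃` in `U`, forms `λ₁,λ₂,λ₃` in `U*`, and a permutation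
`σ ∈ S₃`, the linear form on `L(U^{⊗3})` obtained by composing
`ι*(v₁⊗λ₁) ⊗ ι*(v₂⊗λ₂) ⊗ ι*(v₃⊗λ₃)` with left multiplication by `t_σ`
equals `ι*(v₁⊗λ_{σ⁻¹(1)}) ⊗ ι*(v₂⊗λ_{σ⁻¹(2)}) ⊗ ι*(v₃⊗λ_{σ⁻¹(3)})`,
where `ι*(v⊗λ)` is the form `a ↦ λ(a v)` on `L(U)` and tensor products of such
forms are viewed as forms on `L(U^{⊗3})` via `L(U)^{⊗3} ≅ L(U^{⊗3})`. -/
theorem stmt14 (k U : Type*) [Field k] [AddCommGroup U] [Module k U]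
    [FiniteDimensional k U]
    (v : Fin 3 → U) (l : Fin 3 → Module.Dual k U) (σ : Equiv.Perm (Fin 3))
    (T : Module.End k (U ⊗[k] (U ⊗[k] U)))
    (hT : ∀ w : Fin 3 → U,
      T (w 0 ⊗ₜ (w 1 ⊗ₜ w 2)) = w (σ 0) ⊗ₜ (w (σ 1) ⊗ₜ w (σ 2)))
    (F F' : Module.Dual k (Module.End k (U ⊗[k] (U ⊗[k] U))))
    (hF : ∀ a₁ a₂ a₃ : Module.End k U,
      F (TensorProduct.map a₁ (TensorProduct.map a₂ a₃)) =
        l 0 (a₁ (v 0)) * l 1 (a₂ (v 1)) * l 2 (a₃ (v 2)))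
    (hF' : ∀ a₁ a₂ a₃ : Module.End k U,
      F' (TensorProduct.map a₁ (TensorProduct.map a₂ a₃)) =
        l (σ⁻¹ 0) (a₁ (v 0)) * l (σ⁻¹ 1) (a₂ (v 1)) * l (σ⁻¹ 2) (a₃ (v 2))) :
    F ∘ₗ LinearMap.mulLeft k T = F' := by
  classical
  set n := Module.finrank k U
  set B : Module.Basis (Fin n) k U := Module.finBasis k U with hB
  set B3 : Module.Basis (Fin n × Fin n × Fin n) k (U ⊗[k] (U ⊗[k] U)) :=
    B.tensorProduct (B.tensorProduct B) with hB3
  -- the triple tensor of elementary endomorphisms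
  set E : (Fin 3 → Fin n) → (Fin 3 → Fin n) → Module.End k (U ⊗[k] (U ⊗[k] U)) :=
    fun i j => TensorProduct.map (B.end (i 0, j 0))
      (TensorProduct.map (B.end (i 1, j 1)) (B.end (i 2, j 2))) with hE
  have claimA : ∀ i j : Fin 3 → Fin n,
      B3.end ((i 0, i 1, i 2), (j 0, j 1, j 2)) = E i j := by
    intro i j
    apply B3.ext
    rintro ⟨a, b, c⟩
    rw [Module.Basis.end_apply_apply]
    simp only [hB3, hE, Module.Basis.tensorProduct_apply, TensorProduct.map_tmul,
      Module.Basis.end_apply_apply]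
    by_cases h1 : j 0 = a <;> by_cases h2 : j 1 = b <;> by_cases h3 : j 2 = c <;>
      simp [h1, h2, h3, Prod.ext_iff, TensorProduct.ite_tmul, TensorProduct.tmul_ite]
  have claimB : ∀ i j : Fin 3 → Fin n, T ∘ₗ E i j = E (i ∘ σ) j := by
    intro i j
    apply B3.ext
    rintro ⟨a, b, c⟩
    simp only [hB3, hE, Module.Basis.tensorProduct_apply, LinearMap.comp_apply,
      TensorProduct.map_tmul, Module.Basis.end_apply_apply, Function.comp]
    by_cases h1 : j 0 = a <;> by_cases h2 : j 1 = b <;> by_cases h3 : j 2 = c <;>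
      simp [h1, h2, h3, hT (fun t => B (i t))]
  have hrk : ∀ (a b : Fin n) (x : U), (B.end (a, b)) x = B.coord b x • B a := by
    intro a b x
    have : (B.end (a, b)) = (B.coord b).smulRight (B a) := by
      apply B.ext
      intro c
      rw [Module.Basis.end_apply_apply]
      rcases eq_or_ne b c with h | h
      · simp [h, Module.Basis.coord_apply, Finsupp.single_apply]
      · simp [h, Ne.symm h, Module.Basis.coord_apply, Finsupp.single_apply]
    rw [this]; rfl
  apply B3.end.ext
  rintro ⟨⟨p1, p2, p3⟩, ⟨q1, q2, q3⟩⟩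
  set i : Fin 3 → Fin n := ![p1, p2, p3] with hi
  set j : Fin 3 → Fin n := ![q1, q2, q3] with hj
  have hidx : ((p1, p2, p3), (q1, q2, q3)) = ((i 0, i 1, i 2), (j 0, j 1, j 2)) := by
    simp [hi, hj]
  rw [hidx, LinearMap.comp_apply, LinearMap.mulLeft_apply, claimA,
    Module.End.mul_eq_comp, claimB]
  simp only [hE, Function.comp]
  rw [hF, hF']
  simp only [hrk, map_smul, smul_eq_mul]
  have key : ∀ t : Fin 3, l t (B (i (σ t))) = (fun t => l (σ⁻¹ t) (B (i t))) (σ t) := by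
    intro t; simp
  have hg : l 0 (B (i (σ 0))) * l 1 (B (i (σ 1))) * l 2 (B (i (σ 2))) =
      l (σ⁻¹ 0) (B (i 0)) * l (σ⁻¹ 1) (B (i 1)) * l (σ⁻¹ 2) (B (i 2)) := by
    rw [key 0, key 1, key 2]
    have := Equiv.prod_comp σ (fun t => l (σ⁻¹ t) (B (i t)))
    rw [Fin.prod_univ_three, Fin.prod_univ_three] at this
    exact this
  linear_combination (B.coord (j 0)) (v 0) * (B.coord (j 1)) (v 1) *
    (B.coord (j 2)) (v 2) * hg
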